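/- For every integer k ≥ 2, the graph H_k with vertex set {z,w} ∪ {x_i, y_i : i ∈ [k]}, where for each i the vertices x_i y_i z w x_i form a 4-cycle (edges x_i y_i, y_i z, z w, w x_i), satisfies μ(H_k) = μ_o(H_k) = μ_d(H_k) = μ_t(H_k) = 2k. -/

import Mathlib

open SimpleGraph

/-- `u` and `v` are `X`-visible in `G`: there is a shortest `u,v`-walk whose
vertices meet `X` only possibly in `u` and `v`. -/
def IsMVisible {V : Type*} (G : SimpleGraph V) (X : Set V) (u v : V) : Prop :=
  ∃ P : G.Walk u v, P.length = G.dist u v ∧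
    ∀ w ∈ P.support, w ∈ X → w = u ∨ w = v

/-- mutual-visibility set -/
def IsMVSet {V : Type*} (G : SimpleGraph V) (X : Set V) : Prop :=
  ∀ u ∈ X, ∀ v ∈ X, IsMVisible G X u v

/-- outer mutual-visibility set -/
def IsOuterMVSet {V : Type*} (G : SimpleGraph V) (X : Set V) : Prop :=
  ∀ u ∈ X, ∀ v : V, IsMVisible G X u v

/-- dual mutual-visibility set -/
def IsDualMVSet {V : Type*} (G : SimpleGraph V) (X : Set V) : Prop :=
  (∀ u ∈ X, ∀ v ∈ X, IsMVisible G X u v) ∧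
  (∀ u ∉ X, ∀ v ∉ X, IsMVisible G X u v)

/-- total mutual-visibility set -/
def IsTotalMVSet {V : Type*} (G : SimpleGraph V) (X : Set V) : Prop :=
  ∀ u v : V, IsMVisible G X u v

/-- the mutual-visibility number μ(G) -/
noncomputable def mu {V : Type*} (G : SimpleGraph V) : ℕ :=
  sSup {n | ∃ X : Set V, IsMVSet G X ∧ X.ncard = n}

/-- the outer mutual-visibility number μₒ(G) -/
noncomputable def muO {V : Type*} (G : SimpleGraph V) : ℕ :=
  sSup {n | ∃ X : Set V, IsOuterMVSet G X ∧ X.ncard = n}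

/-- the dual mutual-visibility number μ_d(G) -/
noncomputable def muD {V : Type*} (G : SimpleGraph V) : ℕ :=
  sSup {n | ∃ X : Set V, IsDualMVSet G X ∧ X.ncard = n}

/-- the total mutual-visibility number μ_t(G) -/
noncomputable def muT {V : Type*} (G : SimpleGraph V) : ℕ :=
  sSup {n | ∃ X : Set V, IsTotalMVSet G X ∧ X.ncard = n}

/-- relation underlying the graph `H_k`; with `z = Sum.inl true`, `w = Sum.inl false`,
`x i = Sum.inr (i, false)`, `y i = Sum.inr (i, true)`, the edges are exactly
`z w`, `w x_i`, `x_i y_i`, `y_i z`, i.e. each `x_i y_i z w x_i` is a 4-cycle. -/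
def Hrel (k : ℕ) : (Bool ⊕ Fin k × Bool) → (Bool ⊕ Fin k × Bool) → Prop
  | Sum.inl a, Sum.inl b => a ≠ b
  | Sum.inl a, Sum.inr p => a = p.2
  | Sum.inr p, Sum.inl a => a = p.2
  | Sum.inr p, Sum.inr q => p.1 = q.1 ∧ p.2 ≠ q.2

/-- the graph `H_k` from the paper -/
def Hgraph (k : ℕ) : SimpleGraph (Bool ⊕ Fin k × Bool) := SimpleGraph.fromRel (Hrel k)

namespace HProof
open Sum

variable {k : ℕ}

lemma hrel_symm {a b : Bool ⊕ Fin k × Bool} : Hrel k a b ↔ Hrel k b a := by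
  cases a <;> cases b <;> simp [Hrel] <;> tauto

lemma adj_iff {a b : Bool ⊕ Fin k × Bool} :
    (Hgraph k).Adj a b ↔ a ≠ b ∧ Hrel k a b := by
  rw [Hgraph, fromRel_adj]
  constructor
  · rintro ⟨h1, h2 | h2⟩
    exacts [⟨h1, h2⟩, ⟨h1, hrel_symm.2 h2⟩]
  · rintro ⟨h1, h2⟩; exact ⟨h1, Or.inl h2⟩

@[simp] lemma adj_inl_inl {a b : Bool} :
    (Hgraph k).Adj (inl a) (inl b) ↔ a ≠ b := by simp [adj_iff, Hrel]

@[simp] lemma adj_inl_inr {a : Bool} {p : Fin k × Bool} :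
    (Hgraph k).Adj (inl a) (inr p) ↔ a = p.2 := by simp [adj_iff, Hrel]

@[simp] lemma adj_inr_inl {a : Bool} {p : Fin k × Bool} :
    (Hgraph k).Adj (inr p) (inl a) ↔ a = p.2 := by simp [adj_iff, Hrel]

@[simp] lemma adj_inr_inr {p q : Fin k × Bool} :
    (Hgraph k).Adj (inr p) (inr q) ↔ p.1 = q.1 ∧ p.2 ≠ q.2 := by
  simp only [adj_iff, Hrel, ne_eq, inr.injEq]
  constructor
  · tauto
  · rintro ⟨h1, h2⟩
    exact ⟨fun h => h2 (by rw [h]), h1, h2⟩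

lemma dist_inl_inl {a b : Bool} (h : a ≠ b) :
    (Hgraph k).dist (inl a) (inl b) = 1 :=
  dist_eq_one_iff_adj.2 (by simpa using h)

lemma dist_adj_inl_inr {a : Bool} {p : Fin k × Bool} (h : a = p.2) :
    (Hgraph k).dist (inl a) (inr p) = 1 :=
  dist_eq_one_iff_adj.2 (by simpa using h)

lemma dist_inr_inr_adj {p q : Fin k × Bool} (h1 : p.1 = q.1) (h2 : p.2 ≠ q.2) :
    (Hgraph k).dist (inr p) (inr q) = 1 :=
  dist_eq_one_iff_adj.2 (by simp [h1, h2])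

lemma dist_inl_inr {a : Bool} {p : Fin k × Bool} (h : a ≠ p.2) :
    (Hgraph k).dist (inl a) (inr p) = 2 := by
  have ha1 : (Hgraph k).Adj (inl a) (inl p.2) := by simpa using h
  have ha2 : (Hgraph k).Adj (inl p.2) (inr p) := by simp
  have hle : (Hgraph k).dist (inl a) (inr p) ≤ 2 := by
    simpa using dist_le (Walk.cons ha1 (Walk.cons ha2 Walk.nil))
  have h0 : 0 < (Hgraph k).dist (inl a) (inr p) :=
    (Walk.cons ha1 (Walk.cons ha2 Walk.nil)).reachable.pos_dist_of_ne (by simp)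
  have h1 : (Hgraph k).dist (inl a) (inr p) ≠ 1 := by
    intro hd
    exact h (by simpa using dist_eq_one_iff_adj.1 hd)
  omega

lemma dist_inr_inr_two {p q : Fin k × Bool} (h1 : p.1 ≠ q.1) (h2 : p.2 = q.2) :
    (Hgraph k).dist (inr p) (inr q) = 2 := by
  have ha1 : (Hgraph k).Adj (inr p) (inl p.2) := by simp
  have ha2 : (Hgraph k).Adj (inl p.2) (inr q) := by simp [h2]
  have hpq : p ≠ q := fun h => h1 (congrArg Prod.fst h)
  have hle : (Hgraph k).dist (inr p) (inr q) ≤ 2 := by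
    simpa using dist_le (Walk.cons ha1 (Walk.cons ha2 Walk.nil))
  have h0 : 0 < (Hgraph k).dist (inr p) (inr q) :=
    (Walk.cons ha1 (Walk.cons ha2 Walk.nil)).reachable.pos_dist_of_ne
      (by simpa using hpq)
  have hne1 : (Hgraph k).dist (inr p) (inr q) ≠ 1 := by
    intro hd
    have := dist_eq_one_iff_adj.1 hd
    rw [adj_inr_inr] at this
    exact h1 this.1
  omega

lemma dist_inr_inr_three {p q : Fin k × Bool} (h1 : p.1 ≠ q.1) (h2 : p.2 ≠ q.2) :
    (Hgraph k).dist (inr p) (inr q) = 3 := by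
  have ha1 : (Hgraph k).Adj (inr p) (inl p.2) := by simp
  have ha2 : (Hgraph k).Adj (inl p.2) (inl q.2) := by simpa using h2
  have ha3 : (Hgraph k).Adj (inl q.2) (inr q) := by simp
  have hpq : p ≠ q := fun h => h1 (congrArg Prod.fst h)
  have hle : (Hgraph k).dist (inr p) (inr q) ≤ 3 := by
    simpa using dist_le (Walk.cons ha1 (Walk.cons ha2 (Walk.cons ha3 Walk.nil)))
  have h0 : 0 < (Hgraph k).dist (inr p) (inr q) :=
    (Walk.cons ha1 (Walk.cons ha2 (Walk.cons ha3 Walk.nil))).reachable.pos_dist_of_ne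
      (by simpa using hpq)
  have hne1 : (Hgraph k).dist (inr p) (inr q) ≠ 1 := by
    intro hd
    have := dist_eq_one_iff_adj.1 hd
    rw [adj_inr_inr] at this
    exact h1 this.1
  have hne2 : (Hgraph k).dist (inr p) (inr q) ≠ 2 := by
    intro hd
    obtain ⟨P, hP⟩ :=
      (Walk.cons ha1 (Walk.cons ha2 (Walk.cons ha3 Walk.nil))).reachable.exists_walk_length_eq_dist
    rw [hd] at hP
    cases P with
    | nil => simp at hP
    | @cons _ m _ hadj P' =>
      cases P' with
      | nil => simp at hP
      | cons hadj' P'' =>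
        cases P'' with
        | nil =>
          cases m with
          | inl c =>
            rw [adj_inr_inl] at hadj
            rw [adj_inl_inr] at hadj'
            exact h2 (hadj ▸ hadj')
          | inr r =>
            rw [adj_inr_inr] at hadj
            rw [adj_inr_inr] at hadj'
            exact h1 (hadj.1.trans hadj'.1)
        | cons _ _ => simp [Walk.length_cons] at hP
  omega


/-- reversal symmetry of visibility -/
lemma IsMVisible.symm' {V : Type*} {G : SimpleGraph V} {X : Set V} {u v : V}
    (h : IsMVisible G X u v) : IsMVisible G X v u := by
  obtain ⟨P, h1, h2⟩ := h
  exact ⟨P.reverse, by simp [h1, SimpleGraph.dist_comm],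
    fun w hw hwX => (h2 w (by simpa using hw) hwX).symm⟩

/-- the canonical total mutual-visibility set -/
lemma total_range_inr : IsTotalMVSet (Hgraph k) (Set.range inr) := by
  have hnotmem : ∀ a : Bool, (inl a : Bool ⊕ Fin k × Bool) ∉ Set.range inr := by
    simp
  -- a helper for proving visibility of (inl a) with things
  have key : ∀ (a : Bool) (v : Bool ⊕ Fin k × Bool),
      IsMVisible (Hgraph k) (Set.range inr) (inl a) v := by
    intro a v
    cases v with
    | inl b =>
      by_cases hab : a = b
      · subst hab
        exact ⟨Walk.nil, by rw [SimpleGraph.dist_self]; rfl, by simp⟩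
      · refine ⟨Walk.cons (by simpa using hab) Walk.nil, by simp [dist_inl_inl hab], ?_⟩
        intro w hw hX
        simp only [Walk.support_cons, Walk.support_nil, List.mem_cons] at hw
        tauto
    | inr p =>
      by_cases hap : a = p.2
      · refine ⟨Walk.cons (by simpa using hap) Walk.nil,
          by simp [dist_adj_inl_inr hap], ?_⟩
        intro w hw hX
        simp only [Walk.support_cons, Walk.support_nil, List.mem_cons] at hw
        tauto
      · refine ⟨Walk.cons (by simpa using hap : (Hgraph k).Adj (inl a) (inl p.2))
          (Walk.cons (by simp) Walk.nil), by simp [dist_inl_inr hap], ?_⟩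
        intro w hw hX
        simp only [Walk.support_cons, Walk.support_nil, List.mem_cons] at hw
        rcases hw with rfl | rfl | rfl | h
        · exact absurd hX (hnotmem a)
        · exact absurd hX (hnotmem p.2)
        · exact Or.inr rfl
        · exact absurd h List.not_mem_nil
  intro u v
  cases u with
  | inl a => exact key a v
  | inr p =>
    cases v with
    | inl b => exact IsMVisible.symm' (key b (inr p))
    | inr q =>
      by_cases hpq : p = q
      · subst hpq
        exact ⟨Walk.nil, by rw [SimpleGraph.dist_self]; rfl, by simp⟩
      · by_cases h1 : p.1 = q.1
        · have h2 : p.2 ≠ q.2 := by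
            intro h2; exact hpq (Prod.ext h1 h2)
          refine ⟨Walk.cons (by simp [h1, h2]) Walk.nil,
            by simp [dist_inr_inr_adj h1 h2], ?_⟩
          intro w hw hX
          simp only [Walk.support_cons, Walk.support_nil, List.mem_cons] at hw
          tauto
        · by_cases h2 : p.2 = q.2
          · refine ⟨Walk.cons (by simp : (Hgraph k).Adj (inr p) (inl p.2))
              (Walk.cons (by simp [h2]) Walk.nil),
              by simp [dist_inr_inr_two h1 h2], ?_⟩
            intro w hw hX
            simp only [Walk.support_cons, Walk.support_nil, List.mem_cons] at hw
            rcases hw with rfl | rfl | rfl | h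
            · exact Or.inl rfl
            · exact absurd hX (hnotmem p.2)
            · exact Or.inr rfl
            · exact absurd h List.not_mem_nil
          · refine ⟨Walk.cons (by simp : (Hgraph k).Adj (inr p) (inl p.2))
              (Walk.cons (by simpa using h2 : (Hgraph k).Adj (inl p.2) (inl q.2))
                (Walk.cons (by simp) Walk.nil)),
              by simp [dist_inr_inr_three h1 h2], ?_⟩
            intro w hw hX
            simp only [Walk.support_cons, Walk.support_nil, List.mem_cons] at hw
            rcases hw with rfl | rfl | rfl | rfl | h
            · exact Or.inl rfl
            · exact absurd hX (hnotmem p.2)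
            · exact absurd hX (hnotmem q.2)
            · exact Or.inr rfl
            · exact absurd h List.not_mem_nil

lemma ncard_range_inr : (Set.range (inr : Fin k × Bool → Bool ⊕ Fin k × Bool)).ncard = 2 * k := by
  rw [← Set.image_univ, Set.ncard_image_of_injective _ inr_injective, Set.ncard_univ]
  simp [Nat.card_eq_fintype_card, mul_comm]

/-- every mutual-visibility set of `H_k` has at most `2k` vertices -/
lemma mvset_card_le (hk : 2 ≤ k) {X : Set (Bool ⊕ Fin k × Bool)}
    (hX : IsMVSet (Hgraph k) X) : X.ncard ≤ 2 * k := by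
  by_contra hlt
  push_neg at hlt
  have hcard : Nat.card (Bool ⊕ Fin k × Bool) = 2 * k + 2 := by
    simp [Nat.card_eq_fintype_card]; ring
  have hXle : X.ncard ≤ 2 * k + 2 := by
    have := Set.ncard_le_ncard (Set.subset_univ X) (Set.finite_univ)
    rwa [Set.ncard_univ, hcard] at this
  have hcompl : Xᶜ.ncard ≤ 1 := by
    have := Set.ncard_add_ncard_compl X
    omega
  have hone : ∀ a b : Bool ⊕ Fin k × Bool, a ∉ X → b ∉ X → a = b := by
    intro a b ha hb
    by_contra hne
    have : 1 < Xᶜ.ncard := (Set.one_lt_ncard (Set.toFinite _)).2 ⟨a, ha, b, hb, hne⟩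
    omega
  -- indices 0 and 1
  have h01 : (⟨0, by omega⟩ : Fin k) ≠ ⟨1, by omega⟩ := by
    intro h; simpa using congrArg Fin.val h
  -- choose a pair (x_i, y_j) with i ≠ j, both in X
  obtain ⟨i, j, hij, hxi, hyj⟩ :
      ∃ i j : Fin k, i ≠ j ∧ inr (i, false) ∈ X ∧ inr (j, true) ∈ X := by
    by_cases hx0 : inr ((⟨0, by omega⟩ : Fin k), false) ∈ X
    · by_cases hy1 : inr ((⟨1, by omega⟩ : Fin k), true) ∈ X
      · exact ⟨_, _, h01, hx0, hy1⟩
      · refine ⟨⟨1, by omega⟩, ⟨0, by omega⟩, h01.symm, ?_, ?_⟩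
        · by_contra hc
          exact (by simpa using (hone _ _ hc hy1))
        · by_contra hc
          exact (by simpa using (hone _ _ hc hy1))
    · refine ⟨⟨1, by omega⟩, ⟨0, by omega⟩, h01.symm, ?_, ?_⟩
      · by_contra hc
        exact (by simpa using (hone _ _ hc hx0))
      · by_contra hc
        exact (by simpa using (hone _ _ hc hx0))
  obtain ⟨P, hlen, hsup⟩ := hX _ hxi _ hyj
  rw [dist_inr_inr_three (by simpa using hij) (by simp)] at hlen
  -- destructure the walk of length 3
  cases P with
  | @cons _ m _ had1 P' =>
    cases P' with
    | nil => simp at hlen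
    | @cons _ m' _ had2 P'' =>
      cases P'' with
      | nil => simp at hlen
      | @cons _ m'' _ had3 P''' =>
        cases P''' with
        | cons _ _ => simp [Walk.length_cons] at hlen
        | nil =>
          -- m is a neighbour of x_i, m' a neighbour of y_j
          have hm : m = inl false ∨ m = inr (i, true) := by
            cases m with
            | inl c =>
              rw [adj_inr_inl] at had1
              exact Or.inl (by rw [had1])
            | inr r =>
              rw [adj_inr_inr] at had1
              refine Or.inr ?_
              have : r.2 = true := by
                cases hr2 : r.2
                · exact absurd hr2.symm had1.2
                · rfl
              rw [show r = (i, true) from Prod.ext had1.1.symm this]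
          have hm' : m' = inl true ∨ m' = inr (j, false) := by
            cases m' with
            | inl c =>
              rw [adj_inl_inr] at had3
              exact Or.inl (by rw [had3])
            | inr r =>
              rw [adj_inr_inr] at had3
              refine Or.inr ?_
              have : r.2 = false := by
                cases hr2 : r.2
                · rfl
                · exact absurd hr2 (by simpa using had3.2)
              rw [show r = (j, false) from Prod.ext had3.1 this]
          have hmem : m ∈ (Walk.cons had1 (Walk.cons had2 (Walk.cons had3 Walk.nil))).support ∧
              m' ∈ (Walk.cons had1 (Walk.cons had2 (Walk.cons had3 Walk.nil))).support := by
            constructor <;> simp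
          have hmX : m ∉ X := by
            intro hmX
            have h := hsup m hmem.1 hmX
            rcases hm with rfl | rfl
            · rcases h with h | h <;> exact absurd h (by simp)
            · rcases h with h | h
              · exact absurd h (by simp)
              · exact hij (by simpa using h)
          have hm'X : m' ∉ X := by
            intro hm'X
            have h := hsup m' hmem.2 hm'X
            rcases hm' with rfl | rfl
            · rcases h with h | h <;> exact absurd h (by simp)
            · rcases h with h | h
              · have hji : j = i := by simpa using h
                exact hij hji.symm
              · exact absurd h (by simp)
          have hcontr : m = m' := hone m m' hmX hm'X
          rcases hm with rfl | rfl <;> rcases hm' with rfl | rfl <;>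
            revert hcontr <;> simp

end HProof

open HProof Sum

theorem stmt_11 (k : ℕ) (hk : 2 ≤ k) :
    mu (Hgraph k) = 2 * k ∧ muO (Hgraph k) = 2 * k ∧
      muD (Hgraph k) = 2 * k ∧ muT (Hgraph k) = 2 * k := by
  have htot := total_range_inr (k := k)
  have hcard := ncard_range_inr (k := k)
  have sup_eq : ∀ S : Set ℕ, (2 * k) ∈ S → (∀ n ∈ S, n ≤ 2 * k) → sSup S = 2 * k := by
    intro S hmem hub
    exact le_antisymm (csSup_le ⟨_, hmem⟩ hub) (le_csSup ⟨2 * k, hub⟩ hmem)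
  refine ⟨?_, ?_, ?_, ?_⟩
  · exact sup_eq _ ⟨_, fun u _ v _ => htot u v, hcard⟩
      (fun n ⟨X, hXmv, hXc⟩ => hXc ▸ mvset_card_le hk hXmv)
  · exact sup_eq _ ⟨_, fun u _ v => htot u v, hcard⟩
      (fun n ⟨X, hXmv, hXc⟩ => hXc ▸ mvset_card_le hk (fun u hu v _ => hXmv u hu v))
  · exact sup_eq _ ⟨_, ⟨fun u _ v _ => htot u v, fun u _ v _ => htot u v⟩, hcard⟩
      (fun n ⟨X, hXmv, hXc⟩ => hXc ▸ mvset_card_le hk (fun u hu v hv => hXmv.1 u hu v hv))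
  · exact sup_eq _ ⟨_, htot, hcard⟩
      (fun n ⟨X, hXmv, hXc⟩ => hXc ▸ mvset_card_le hk (fun u _ v _ => hXmv u v))
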